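/- The map α: Aut(X) × Q_k → ℤ defined by α(g, x) = −i, where i is the unique integer with g x ∈ σ^i Q_k, is a cocycle, and the formula g · x = σ^{α(g,x)}(g x) defines a group action of Aut(X) on Q_k under which σ acts trivially. -/

import Mathlib

def shift {A : Type*} (x : ℤ → A) : ℤ → A := fun n => x (n + 1)

def shiftIter {A : Type*} (i : ℤ) (x : ℤ → A) : ℤ → A := fun n => x (n + i)

def Qset {A : Type*} (X : Set (ℤ → A)) (k : ℕ) : Set (ℤ → A) :=
  {x | x ∈ X ∧ (∀ n : ℤ, n < k → x n = x (n - k)) ∧ x (k : ℤ) ≠ x ((k : ℤ) - k) ∧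
    ∀ k' : ℕ, 0 < k' → k' < k → ¬ ∀ n : ℤ, n < k → x n = x (n - k')}

/-- `g` is an automorphism: it commutes with the shift. -/
def CommutesWithShift {A : Type*} [TopologicalSpace A] (X : Set (ℤ → A)) (g : X ≃ₜ X) : Prop :=
  ∀ (x : X) (hs : shift (x : ℤ → A) ∈ X),
    ((g ⟨shift (x : ℤ → A), hs⟩ : X) : ℤ → A) = shift ((g x : X) : ℤ → A)

lemma shiftIter_zero {A : Type*} (x : ℤ → A) : shiftIter 0 x = x := by
  funext n; simp [shiftIter]

lemma shiftIter_comp {A : Type*} (a b : ℤ) (x : ℤ → A) :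
    shiftIter a (shiftIter b x) = shiftIter (a + b) x := by
  funext n; simp only [shiftIter]; congr 1; ring

lemma shift_eq_iter {A : Type*} (x : ℤ → A) : shift x = shiftIter 1 x := rfl

lemma shiftIter_succ {A : Type*} (i : ℤ) (x : ℤ → A) :
    shiftIter (i + 1) x = shift (shiftIter i x) := by
  funext n; simp only [shiftIter, shift]; congr 1; ring

lemma shiftIter_pred {A : Type*} (i : ℤ) (x : ℤ → A) :
    shiftIter (i - 1) x = (fun n => shiftIter i x (n - 1)) := by
  funext n; simp only [shiftIter]; congr 1; ring

lemma shiftIter_mem {A : Type*} [TopologicalSpace A] (X : Set (ℤ → A))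
    (hinv : ∀ x ∈ X, shift x ∈ X) (hinv' : ∀ x ∈ X, (fun n : ℤ => x (n - 1)) ∈ X) :
    ∀ (i : ℤ) (x : ℤ → A), x ∈ X → shiftIter i x ∈ X := by
  intro i
  induction i using Int.induction_on with
  | zero => intro x hx; rw [shiftIter_zero]; exact hx
  | succ i ih =>
      intro x hx
      rw [shiftIter_succ]
      exact hinv _ (ih x hx)
  | pred i ih =>
      intro x hx
      have : (-(i:ℤ) - 1) = (-(i:ℤ)) - 1 := rfl
      rw [shiftIter_pred]
      exact hinv' _ (ih x hx)

lemma comm_inv {A : Type*} [TopologicalSpace A] (X : Set (ℤ → A))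
    (g : X ≃ₜ X) (hg : CommutesWithShift X g)
    (x : X) (hs : (fun n : ℤ => (x : ℤ → A) (n - 1)) ∈ X) :
    ((g ⟨fun n : ℤ => (x : ℤ → A) (n - 1), hs⟩ : X) : ℤ → A)
      = fun n : ℤ => ((g x : X) : ℤ → A) (n - 1) := by
  set y : X := ⟨fun n : ℤ => (x : ℤ → A) (n - 1), hs⟩ with hy
  have hsy : shift ((y : ℤ → A)) = (x : ℤ → A) := by
    funext n; simp [shift, hy]
  have hs2 : shift ((y : ℤ → A)) ∈ X := hsy ▸ x.2
  have h1 := hg y hs2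
  have e : (⟨shift ((y : ℤ → A)), hs2⟩ : X) = x := Subtype.ext hsy
  rw [e] at h1
  funext n
  have := congrFun h1 (n - 1)
  simp only [shift] at this
  rw [this]
  congr 1; ring

lemma comm_iter {A : Type*} [TopologicalSpace A] (X : Set (ℤ → A))
    (hinv : ∀ x ∈ X, shift x ∈ X) (hinv' : ∀ x ∈ X, (fun n : ℤ => x (n - 1)) ∈ X)
    (g : X ≃ₜ X) (hg : CommutesWithShift X g) :
    ∀ (i : ℤ) (x : X) (hX : shiftIter i (x : ℤ → A) ∈ X),
      ((g ⟨shiftIter i (x : ℤ → A), hX⟩ : X) : ℤ → A) = shiftIter i ((g x : X) : ℤ → A) := by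
  intro i
  induction i using Int.induction_on with
  | zero =>
      intro x hX
      have e : (⟨shiftIter 0 (x : ℤ → A), hX⟩ : X) = x := Subtype.ext (shiftIter_zero _)
      rw [e, shiftIter_zero]
  | succ i ih =>
      intro x hX
      have him : shiftIter i (x : ℤ → A) ∈ X := shiftIter_mem X hinv hinv' i _ x.2
      have hs2 : shift ((⟨shiftIter i (x : ℤ → A), him⟩ : X) : ℤ → A) ∈ X := by
        rw [← shiftIter_succ]; exact hX
      have e : (⟨shiftIter (i + 1) (x : ℤ → A), hX⟩ : X)
          = ⟨shift ((⟨shiftIter i (x : ℤ → A), him⟩ : X) : ℤ → A), hs2⟩ :=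
        Subtype.ext (shiftIter_succ i _)
      rw [e, hg ⟨shiftIter i (x : ℤ → A), him⟩ hs2, ih x him, ← shiftIter_succ]
  | pred i ih =>
      intro x hX
      have him : shiftIter (-(i:ℤ)) (x : ℤ → A) ∈ X := shiftIter_mem X hinv hinv' _ _ x.2
      have hs2 : (fun n : ℤ => ((⟨shiftIter (-(i:ℤ)) (x : ℤ → A), him⟩ : X) : ℤ → A) (n - 1)) ∈ X := by
        rw [← shiftIter_pred]; exact hX
      have e : (⟨shiftIter (-(i:ℤ) - 1) (x : ℤ → A), hX⟩ : X)
          = ⟨fun n : ℤ => ((⟨shiftIter (-(i:ℤ)) (x : ℤ → A), him⟩ : X) : ℤ → A) (n - 1), hs2⟩ :=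
        Subtype.ext (shiftIter_pred _ _)
      rw [e, comm_inv X g hg ⟨shiftIter (-(i:ℤ)) (x : ℤ → A), him⟩ hs2, shiftIter_pred]
      simp only [ih x him]

lemma qset_pos {A : Type*} (X : Set (ℤ → A)) (k : ℕ) (hk : 0 < k) (x : ℤ → A)
    (hx : x ∈ Qset X k) (i : ℤ) (hi : 0 < i) (h2 : shiftIter i x ∈ Qset X k) : False := by
  have h1 := h2.2.1 ((k : ℤ) - i) (by omega)
  simp only [shiftIter] at h1
  have e1 : (k : ℤ) - i + i = (k : ℤ) := by ring
  have e2 : (k : ℤ) - i - k + i = (k : ℤ) - k := by ring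
  rw [e1, e2] at h1
  exact hx.2.2.1 h1

lemma qset_uniq {A : Type*} (X : Set (ℤ → A)) (k : ℕ) (hk : 0 < k) (x : ℤ → A)
    (hx : x ∈ Qset X k) (i : ℤ) (h2 : shiftIter i x ∈ Qset X k) : i = 0 := by
  by_contra hne
  rcases lt_trichotomy i 0 with h | h | h
  · have hxx : shiftIter (-i) (shiftIter i x) ∈ Qset X k := by
      rw [shiftIter_comp]
      simpa [shiftIter_zero] using hx
    exact qset_pos X k hk _ h2 (-i) (by omega) hxx
  · exact hne h
  · exact qset_pos X k hk x hx i h h2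

lemma qset_uniq' {A : Type*} (X : Set (ℤ → A)) (k : ℕ) (hk : 0 < k) (z : ℤ → A)
    (a b : ℤ) (ha : shiftIter a z ∈ Qset X k) (hb : shiftIter b z ∈ Qset X k) : a = b := by
  have h : shiftIter (a - b) (shiftIter b z) ∈ Qset X k := by
    rw [shiftIter_comp]
    have : a - b + b = a := by ring
    rw [this]; exact ha
  have := qset_uniq X k hk _ hb (a - b) h
  omega

/-- `α` is a cocycle and `g · x = σ^{α(g,x)}(g x)` defines an action of `Aut(X)` on
`Q_k`, under which `σ` acts trivially. -/
theorem stmt9 {A : Type*} [Fintype A] [TopologicalSpace A] [DiscreteTopology A]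
    (X : Set (ℤ → A)) (hcl : IsClosed X)
    (hinv : ∀ x ∈ X, shift x ∈ X) (hinv' : ∀ x ∈ X, (fun n : ℤ => x (n - 1)) ∈ X)
    (k : ℕ) (hk : 0 < k) (hQ : (Qset X k).Nonempty)
    (α : (X ≃ₜ X) → (ℤ → A) → ℤ)
    (hα : ∀ g : X ≃ₜ X, CommutesWithShift X g → ∀ (x : ℤ → A) (hx : x ∈ Qset X k),
      shiftIter (α g x) ((g ⟨x, hx.1⟩ : X) : ℤ → A) ∈ Qset X k) :
    -- the cocycle identity `α(gh, x) = α(g, h·x) + α(h, x)`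
    (∀ (g h : X ≃ₜ X) (hg : CommutesWithShift X g) (hh : CommutesWithShift X h)
      (x : ℤ → A) (hx : x ∈ Qset X k),
      α (h.trans g) x
        = α g (shiftIter (α h x) ((h ⟨x, hx.1⟩ : X) : ℤ → A)) + α h x) ∧
    -- `g · x = σ^{α(g,x)}(g x)` is an action: `(gh) · x = g · (h · x)`
    (∀ (g h : X ≃ₜ X) (hg : CommutesWithShift X g) (hh : CommutesWithShift X h)
      (x : ℤ → A) (hx : x ∈ Qset X k),
      shiftIter (α (h.trans g) x) (((h.trans g) ⟨x, hx.1⟩ : X) : ℤ → A)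
        = shiftIter (α g (shiftIter (α h x) ((h ⟨x, hx.1⟩ : X) : ℤ → A)))
            ((g ⟨shiftIter (α h x) ((h ⟨x, hx.1⟩ : X) : ℤ → A),
                (hα h hh x hx).1⟩ : X) : ℤ → A)) ∧
    -- the identity automorphism acts trivially
    (∀ (x : ℤ → A) (hx : x ∈ Qset X k),
      shiftIter (α (Homeomorph.refl X) x) (((Homeomorph.refl X) ⟨x, hx.1⟩ : X) : ℤ → A) = x) ∧
    -- the shift `σ` acts trivially
    (∀ S : X ≃ₜ X, (∀ x : X, ((S x : X) : ℤ → A) = shift (x : ℤ → A)) →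
      CommutesWithShift X S →
      ∀ (x : ℤ → A) (hx : x ∈ Qset X k),
        shiftIter (α S x) ((S ⟨x, hx.1⟩ : X) : ℤ → A) = x) := by
  have htrans : ∀ (g h : X ≃ₜ X), CommutesWithShift X g → CommutesWithShift X h →
      CommutesWithShift X (h.trans g) := by
    intro g h hg hh x hs
    have h1 := hh x hs
    have hs2 : shift ((h x : X) : ℤ → A) ∈ X := h1 ▸ (h ⟨shift (x : ℤ → A), hs⟩).2
    have e : (h ⟨shift (x : ℤ → A), hs⟩ : X) = ⟨shift ((h x : X) : ℤ → A), hs2⟩ :=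
      Subtype.ext h1
    show ((g (h ⟨shift (x : ℤ → A), hs⟩) : X) : ℤ → A) = shift ((g (h x) : X) : ℤ → A)
    rw [e]
    exact hg (h x) hs2
  have e1 : ∀ (g h : X ≃ₜ X) (hg : CommutesWithShift X g) (hh : CommutesWithShift X h)
      (x : ℤ → A) (hx : x ∈ Qset X k),
      ((g ⟨shiftIter (α h x) ((h ⟨x, hx.1⟩ : X) : ℤ → A), (hα h hh x hx).1⟩ : X) : ℤ → A)
        = shiftIter (α h x) (((h.trans g) ⟨x, hx.1⟩ : X) : ℤ → A) := by
    intro g h hg hh x hx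
    exact comm_iter X hinv hinv' g hg (α h x) (h ⟨x, hx.1⟩) (hα h hh x hx).1
  have main : ∀ (g h : X ≃ₜ X) (hg : CommutesWithShift X g) (hh : CommutesWithShift X h)
      (x : ℤ → A) (hx : x ∈ Qset X k),
      α (h.trans g) x = α g (shiftIter (α h x) ((h ⟨x, hx.1⟩ : X) : ℤ → A)) + α h x := by
    intro g h hg hh x hx
    have hz := hα h hh x hx
    have hgz := hα g hg _ hz
    have e2 : shiftIter (α g (shiftIter (α h x) ((h ⟨x, hx.1⟩ : X) : ℤ → A)) + α h x)
        (((h.trans g) ⟨x, hx.1⟩ : X) : ℤ → A) ∈ Qset X k := by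
      rw [← shiftIter_comp, ← e1 g h hg hh x hx]
      exact hgz
    have e3 := hα (h.trans g) (htrans g h hg hh) x hx
    exact qset_uniq' X k hk _ _ _ e3 e2
  refine ⟨main, ?_, ?_, ?_⟩
  · intro g h hg hh x hx
    rw [main g h hg hh x hx, e1 g h hg hh x hx, shiftIter_comp]
  · intro x hx
    have hrefl : CommutesWithShift X (Homeomorph.refl X) := by
      intro y hs; rfl
    have h1 : shiftIter (α (Homeomorph.refl X) x) x ∈ Qset X k := hα _ hrefl x hx
    have h0 : shiftIter 0 x ∈ Qset X k := by rw [shiftIter_zero]; exact hx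
    have heq := qset_uniq' X k hk x _ _ h1 h0
    have ecoe : (((Homeomorph.refl X) ⟨x, hx.1⟩ : X) : ℤ → A) = x := rfl
    rw [ecoe, heq, shiftIter_zero]
  · intro S hS hSc x hx
    have ecoe : ((S ⟨x, hx.1⟩ : X) : ℤ → A) = shiftIter 1 x := hS ⟨x, hx.1⟩
    have h1 : shiftIter (α S x + 1) x ∈ Qset X k := by
      have := hα S hSc x hx
      rw [ecoe, shiftIter_comp] at this
      exact this
    have h0 : shiftIter 0 x ∈ Qset X k := by rw [shiftIter_zero]; exact hx
    have heq := qset_uniq' X k hk x _ _ h1 h0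
    rw [ecoe, shiftIter_comp, heq, shiftIter_zero]
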